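/- For any two density matrices ρ, σ on a finite-dimensional Hilbert space, 1 - √F(ρ,σ) ≤ (1/2)‖ρ - σ‖₁, where ‖A‖₁ = tr√(A†A) is the trace norm. -/

import Mathlib

open Matrix
open scoped Classical ComplexOrder

/-- The positive semidefinite square root of a matrix (junk value `0` off PSD matrices). -/
noncomputable def psdSqrt {d : Type*} [Fintype d] [DecidableEq d]
    (A : Matrix d d ℂ) : Matrix d d ℂ :=
  if h : A.PosSemidef then
    (h.1.eigenvectorUnitary : Matrix d d ℂ) * diagonal ((↑) ∘ (√·) ∘ h.1.eigenvalues) *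
      (star h.1.eigenvectorUnitary : Matrix d d ℂ)
  else 0

/-- Uhlmann fidelity `F(ρ,σ) = (tr √(√σ ρ √σ))²`. -/
noncomputable def qFidelity {d : Type*} [Fintype d] [DecidableEq d]
    (ρ σ : Matrix d d ℂ) : ℝ :=
  ((psdSqrt (psdSqrt σ * ρ * psdSqrt σ)).trace.re) ^ 2

/-- Trace norm `‖A‖₁ = tr √(A†A)`. -/
noncomputable def traceNorm {d : Type*} [Fintype d] [DecidableEq d]
    (A : Matrix d d ℂ) : ℝ :=
  (psdSqrt (Aᴴ * A)).trace.re

section Aux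

variable {d : Type*} [Fintype d] [DecidableEq d]

/-- Functional calculus via the spectral decomposition. -/
noncomputable def fm {A : Matrix d d ℂ} (hA : A.IsHermitian) (f : ℝ → ℝ) : Matrix d d ℂ :=
  (hA.eigenvectorUnitary : Matrix d d ℂ) * diagonal ((↑) ∘ f ∘ hA.eigenvalues) *
    (star (hA.eigenvectorUnitary : Matrix d d ℂ))

variable {A : Matrix d d ℂ} (hA : A.IsHermitian) (f g : ℝ → ℝ)

lemma star_mul_self_eigU :
    (star (hA.eigenvectorUnitary : Matrix d d ℂ)) * (hA.eigenvectorUnitary : Matrix d d ℂ) = 1 :=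
  mem_unitaryGroup_iff'.mp (hA.eigenvectorUnitary).2

lemma self_mul_star_eigU :
    (hA.eigenvectorUnitary : Matrix d d ℂ) * (star (hA.eigenvectorUnitary : Matrix d d ℂ)) = 1 :=
  mem_unitaryGroup_iff.mp (hA.eigenvectorUnitary).2

lemma fm_mul_fm : fm hA f * fm hA g = fm hA (fun x => f x * g x) := by
  unfold fm
  have hd : diagonal ((↑) ∘ f ∘ hA.eigenvalues : d → ℂ) * diagonal ((↑) ∘ g ∘ hA.eigenvalues) =
      diagonal ((↑) ∘ (fun x => f x * g x) ∘ hA.eigenvalues) := by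
    rw [diagonal_mul_diagonal]
    exact congrArg diagonal (funext fun x => by simp [Function.comp])
  calc _ = (hA.eigenvectorUnitary : Matrix d d ℂ) * diagonal ((↑) ∘ f ∘ hA.eigenvalues) *
      ((star (hA.eigenvectorUnitary : Matrix d d ℂ)) * (hA.eigenvectorUnitary : Matrix d d ℂ)) *
      (diagonal ((↑) ∘ g ∘ hA.eigenvalues) * (star (hA.eigenvectorUnitary : Matrix d d ℂ))) := by
        simp only [Matrix.mul_assoc]
    _ = _ := by
        rw [star_mul_self_eigU, Matrix.mul_one, Matrix.mul_assoc _ (diagonal _),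
          ← Matrix.mul_assoc (diagonal _), hd, Matrix.mul_assoc]

lemma fm_add_fm : fm hA f + fm hA g = fm hA (fun x => f x + g x) := by
  unfold fm
  rw [← Matrix.add_mul, ← Matrix.mul_add, diagonal_add]
  congr 2
  funext x j
  by_cases h : x = j <;> simp [Matrix.diagonal_apply, h]

lemma fm_sub_fm : fm hA f - fm hA g = fm hA (fun x => f x - g x) := by
  unfold fm
  rw [← Matrix.sub_mul, ← Matrix.mul_sub, diagonal_sub]
  congr 2
  funext x j
  by_cases h : x = j <;> simp [Matrix.diagonal_apply, h]

lemma fm_id : fm hA (fun x => x) = A := by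
  unfold fm
  exact hA.spectral_theorem.symm

lemma fm_one : fm hA (fun _ => 1) = 1 := by
  unfold fm
  have h1 : ((↑) ∘ (fun _ : ℝ => (1:ℝ)) ∘ hA.eigenvalues : d → ℂ) = fun _ => 1 := by
    funext x; simp [Function.comp]
  rw [h1, diagonal_one, Matrix.mul_one, self_mul_star_eigU]

lemma fm_posSemidef (hf : ∀ x, 0 ≤ f x) : (fm hA f).PosSemidef := by
  unfold fm
  rw [star_eq_conjTranspose]
  exact (posSemidef_diagonal_iff.mpr (fun i => by
    simpa [Function.comp] using
      (by exact_mod_cast hf (hA.eigenvalues i) : (0:ℂ) ≤ (f (hA.eigenvalues i) : ℂ)))).mul_mul_conjTranspose_same _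

lemma fm_trace : (fm hA f).trace = ∑ i, (f (hA.eigenvalues i) : ℂ) := by
  unfold fm
  rw [Matrix.trace_mul_cycle, star_mul_self_eigU, Matrix.one_mul, trace_diagonal]
  simp [Function.comp]

/-- The square root of a PSD matrix via the spectral decomposition. -/
noncomputable def Matrix.PosSemidef.sqrt {A : Matrix d d ℂ} (h : A.PosSemidef) : Matrix d d ℂ :=
  fm h.1 Real.sqrt

lemma fm_congr_eig {A : Matrix d d ℂ} (hA : A.IsHermitian) (f g : ℝ → ℝ)
    (H : ∀ i, f (hA.eigenvalues i) = g (hA.eigenvalues i)) : fm hA f = fm hA g := by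
  unfold fm
  congr 3
  funext i
  simp [Function.comp, H i]

lemma fm_eq_cfc {A : Matrix d d ℂ} (hA : A.IsHermitian) (f : ℝ → ℝ) : fm hA f = cfc f A := by
  rw [hA.cfc_eq]
  simp [fm, IsHermitian.cfc]

lemma Matrix.PosSemidef.posSemidef_sqrt {A : Matrix d d ℂ} (h : A.PosSemidef) :
    h.sqrt.PosSemidef :=
  fm_posSemidef h.1 _ (fun x => Real.sqrt_nonneg x)

lemma Matrix.PosSemidef.sqrt_mul_self {A : Matrix d d ℂ} (h : A.PosSemidef) :
    h.sqrt * h.sqrt = A := by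
  unfold Matrix.PosSemidef.sqrt
  rw [fm_mul_fm, fm_congr_eig h.1 _ (fun x => x)
    (fun i => Real.mul_self_sqrt (h.eigenvalues_nonneg i)), fm_id]

lemma Matrix.PosSemidef.eq_sqrt_of_sq_eq {A B : Matrix d d ℂ} (hB : B.PosSemidef)
    (hA : A.PosSemidef) (hsq : B ^ 2 = A) : B = hA.sqrt := by
  unfold Matrix.PosSemidef.sqrt
  have h1 : B = fm hB.1 (fun x => Real.sqrt (x ^ 2)) := by
    rw [fm_congr_eig hB.1 _ (fun x => x)
      (fun i => Real.sqrt_sq (hB.eigenvalues_nonneg i)), fm_id]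
  have hsa : IsSelfAdjoint B := hB.1
  conv_lhs => rw [h1, fm_eq_cfc]
  rw [fm_eq_cfc, ← hsq, ← cfc_pow_id (R := ℝ) B 2 hsa, ← cfc_comp Real.sqrt (fun x : ℝ => x ^ 2) B hsa]
  rfl

lemma psdSqrt_of_posSemidef {A : Matrix d d ℂ} (h : A.PosSemidef) : psdSqrt A = h.sqrt :=
  dif_pos h

lemma sqrt_eq_fm {A : Matrix d d ℂ} (h : A.PosSemidef) : h.sqrt = fm h.1 Real.sqrt := rfl

lemma fm_zero {A : Matrix d d ℂ} (hA : A.IsHermitian) : fm hA (fun _ => 0) = 0 := by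
  unfold fm
  have h1 : ((↑) ∘ (fun _ : ℝ => (0:ℝ)) ∘ hA.eigenvalues : d → ℂ) = fun _ => 0 := by
    funext x; simp [Function.comp]
  rw [h1, diagonal_zero, Matrix.mul_zero, Matrix.zero_mul]

lemma trace_nonneg_of_psd {M : Matrix d d ℂ} (hM : M.PosSemidef) : 0 ≤ M.trace := by
  have : M.trace = ∑ i, M i i := rfl
  rw [this]
  refine Finset.sum_nonneg fun i _ => ?_
  exact hM.diag_nonneg

lemma trace_mul_nonneg {P Q : Matrix d d ℂ} (hP : P.PosSemidef) (hQ : Q.PosSemidef) :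
    0 ≤ (P * Q).trace := by
  have h1 : (hP.sqrt * Q * hP.sqrt).trace = (P * Q).trace := by
    rw [Matrix.trace_mul_cycle, hP.sqrt_mul_self]
  rw [← h1]
  have h2 : hP.sqrt * Q * hP.sqrt = hP.sqrt * Q * (hP.sqrt)ᴴ := by
    rw [hP.posSemidef_sqrt.1]
  rw [h2]
  exact trace_nonneg_of_psd (hQ.mul_mul_conjTranspose_same _)

/-- diagonal entry of conjugated matrix as an inner product -/
lemma diag_conj (U M : Matrix d d ℂ) (i : d) :
    (star U * M * U) i i = dotProduct (star (fun k => U k i)) (M *ᵥ fun k => U k i) := by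
  simp only [Matrix.mul_apply, Matrix.mulVec, dotProduct, Pi.star_apply,
    Matrix.star_apply, Matrix.conjTranspose_apply, Finset.sum_mul, Finset.mul_sum]
  rw [Finset.sum_comm]
  exact Finset.sum_congr rfl fun j _ => Finset.sum_congr rfl fun k _ => by ring

/-- `Re (tr A) ≤ ∑ singular values`. -/
lemma re_trace_le (A : Matrix d d ℂ) :
    (A.trace).re ≤ ∑ i, Real.sqrt ((posSemidef_conjTranspose_mul_self A).1.eigenvalues i) := by
  set hB := posSemidef_conjTranspose_mul_self A with hBdef
  set h : (Aᴴ * A).IsHermitian := hB.1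
  set U : Matrix d d ℂ := (h.eigenvectorUnitary : Matrix d d ℂ) with hU
  have hUs : star U * U = 1 := star_mul_self_eigU h
  have hUs' : U * star U = 1 := self_mul_star_eigU h
  have htr : A.trace = (star U * A * U).trace := by
    rw [Matrix.trace_mul_comm, ← Matrix.mul_assoc, hUs', Matrix.one_mul]
  have hdiag : star U * (Aᴴ * A) * U = diagonal ((↑) ∘ h.eigenvalues : d → ℂ) :=
    by simpa using h.conjStarAlgAut_star_eigenvectorUnitary
  rw [htr]
  have : (star U * A * U).trace = ∑ i, (star U * A * U) i i := rfl
  rw [this, Complex.re_sum]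
  apply Finset.sum_le_sum
  intro i _
  -- the i-th column of U
  set u : d → ℂ := fun k => U k i with hu
  set x : EuclideanSpace ℂ d := (WithLp.equiv 2 (d → ℂ)).symm u
  set y : EuclideanSpace ℂ d := (WithLp.equiv 2 (d → ℂ)).symm (A *ᵥ u)
  have hxy : (star U * A * U) i i = inner ℂ x y := by
    rw [diag_conj, EuclideanSpace.inner_eq_star_dotProduct, dotProduct_comm]
    rfl
  have hxx : (inner ℂ x x : ℂ) = 1 := by
    rw [EuclideanSpace.inner_eq_star_dotProduct, dotProduct_comm]
    have : dotProduct (star u) u = (star U * U) i i := by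
      simp [Matrix.mul_apply, dotProduct, hu, Matrix.star_apply,
        Matrix.conjTranspose_apply, mul_comm]
    exact this.trans (by simp [hUs])
  have hyy : (inner ℂ y y : ℂ) = (h.eigenvalues i : ℂ) := by
    rw [EuclideanSpace.inner_eq_star_dotProduct, dotProduct_comm]
    have e1 : dotProduct (star (A *ᵥ u)) (A *ᵥ u)
        = dotProduct (star u) ((Aᴴ * A) *ᵥ u) := by
      simp [Matrix.star_mulVec, dotProduct_mulVec, Matrix.vecMul_vecMul]
    have e2 : dotProduct (star u) ((Aᴴ * A) *ᵥ u) = (star U * (Aᴴ * A) * U) i i :=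
      (diag_conj U (Aᴴ * A) i).symm
    have e3 : (star U * (Aᴴ * A) * U) i i = (h.eigenvalues i : ℂ) := by
      rw [hdiag]; simp
    calc dotProduct (star ((WithLp.equiv 2 (d → ℂ)) y)) ((WithLp.equiv 2 (d → ℂ)) y)
        = dotProduct (star (A *ᵥ u)) (A *ᵥ u) := rfl
      _ = _ := by rw [e1, e2, e3]
  have hnx : ‖x‖ = 1 := by
    have := norm_eq_sqrt_re_inner (𝕜 := ℂ) x
    rw [this, hxx]; simp
  have hny : ‖y‖ = Real.sqrt (h.eigenvalues i) := by
    have := norm_eq_sqrt_re_inner (𝕜 := ℂ) y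
    rw [this, hyy]; simp
  calc ((star U * A * U) i i).re = (inner ℂ x y : ℂ).re := by rw [hxy]
    _ ≤ ‖(inner ℂ x y : ℂ)‖ := Complex.re_le_norm _
    _ ≤ ‖x‖ * ‖y‖ := norm_inner_le_norm x y
    _ = Real.sqrt (h.eigenvalues i) := by rw [hnx, hny, one_mul]

lemma traceNorm_eq_sum_sqrt (A : Matrix d d ℂ) :
    traceNorm A = ∑ i, Real.sqrt ((posSemidef_conjTranspose_mul_self A).1.eigenvalues i) := by
  unfold traceNorm
  rw [psdSqrt_of_posSemidef (posSemidef_conjTranspose_mul_self A),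
    sqrt_eq_fm, fm_trace, Complex.re_sum]
  simp

lemma traceNorm_nonneg (A : Matrix d d ℂ) : 0 ≤ traceNorm A := by
  rw [traceNorm_eq_sum_sqrt]
  exact Finset.sum_nonneg fun i _ => Real.sqrt_nonneg _

lemma re_trace_le_traceNorm (A : Matrix d d ℂ) : (A.trace).re ≤ traceNorm A := by
  rw [traceNorm_eq_sum_sqrt]; exact re_trace_le A

-- pointwise real lemmas
lemma rsign_mul_self (x : ℝ) : Real.sign x * x = |x| := by
  rcases lt_trichotomy x 0 with h | h | h
  · rw [Real.sign_of_neg h, abs_of_neg h]; ring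
  · simp [h]
  · rw [Real.sign_of_pos h, abs_of_pos h]; ring

lemma rself_mul_sign (x : ℝ) : x * Real.sign x = |x| := by
  rw [mul_comm]; exact rsign_mul_self x

lemma sign_le_one (x : ℝ) : Real.sign x ≤ 1 := by
  rcases lt_trichotomy x 0 with h | h | h
  · rw [Real.sign_of_neg h]; norm_num
  · simp [h]
  · rw [Real.sign_of_pos h]

lemma neg_one_le_sign (x : ℝ) : -1 ≤ Real.sign x := by
  rcases lt_trichotomy x 0 with h | h | h
  · rw [Real.sign_of_neg h]
  · simp [h]
  · rw [Real.sign_of_pos h]; norm_num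

lemma self_mul_pos (x : ℝ) : x * max x 0 = max x 0 * max x 0 := by
  rcases le_total x 0 with h | h
  · rw [max_eq_right h]; ring
  · rw [max_eq_left h]

lemma self_mul_neg' (x : ℝ) : x * max (-x) 0 + max (-x) 0 * max (-x) 0 = 0 := by
  rcases le_total x 0 with h | h
  · rw [max_eq_left (neg_nonneg.mpr h)]; ring
  · rw [max_eq_right (neg_nonpos.mpr h)]; ring

lemma sq_decomp (x : ℝ) : x * x = max x 0 * max x 0 + max (-x) 0 * max (-x) 0 := by
  rcases le_total x 0 with h | h
  · rw [max_eq_right h, max_eq_left (neg_nonneg.mpr h)]; ring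
  · rw [max_eq_left h, max_eq_right (neg_nonpos.mpr h)]; ring

lemma pos_add_neg (x : ℝ) : max x 0 + max (-x) 0 = |x| := by
  rcases le_total x 0 with h | h
  · rw [max_eq_right h, max_eq_left (neg_nonneg.mpr h), abs_of_nonpos h]; ring
  · rw [max_eq_left h, max_eq_right (neg_nonpos.mpr h), abs_of_nonneg h]; ring

lemma pos_sub_neg (x : ℝ) : max x 0 - max (-x) 0 = x := by
  rcases le_total x 0 with h | h
  · rw [max_eq_right h, max_eq_left (neg_nonneg.mpr h)]; ring
  · rw [max_eq_left h, max_eq_right (neg_nonpos.mpr h)]; ring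

end Aux

/-- Fuchs–van de Graaf: `1 - √F(ρ,σ) ≤ (1/2)‖ρ - σ‖₁`. -/
theorem stmt7 {d : Type*} [Fintype d] [DecidableEq d]
    (ρ σ : Matrix d d ℂ) (hρ : ρ.PosSemidef) (hσ : σ.PosSemidef)
    (hρ1 : ρ.trace = 1) (hσ1 : σ.trace = 1) :
    1 - Real.sqrt (qFidelity ρ σ) ≤ (1 / 2) * traceNorm (ρ - σ) := by
  have hRps : (psdSqrt ρ).PosSemidef := by
    rw [psdSqrt_of_posSemidef hρ]; exact hρ.posSemidef_sqrt
  have hSps : (psdSqrt σ).PosSemidef := by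
    rw [psdSqrt_of_posSemidef hσ]; exact hσ.posSemidef_sqrt
  have hRsq : psdSqrt ρ * psdSqrt ρ = ρ := by
    rw [psdSqrt_of_posSemidef hρ]; exact hρ.sqrt_mul_self
  have hSsq : psdSqrt σ * psdSqrt σ = σ := by
    rw [psdSqrt_of_posSemidef hσ]; exact hσ.sqrt_mul_self
  set R := psdSqrt ρ
  set S := psdSqrt σ
  have hT : (R - S).IsHermitian := hRps.1.sub hSps.1
  have hΔ : (ρ - σ).IsHermitian := hρ.1.sub hσ.1
  set T := R - S with hTdef
  set M := R + S with hMdef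
  set Δ := ρ - σ with hΔdef
  set W := fm hT Real.sign with hWdef
  set Tp := fm hT (fun x => max x 0) with hTpdef
  set Tm := fm hT (fun x => max (-x) 0) with hTmdef
  set Tabs := fm hT (fun x => |x|) with hTabsdef
  have hTfm : fm hT (fun x => x) = T := fm_id hT
  have hWT : W * T = Tabs :=
    calc W * T = fm hT Real.sign * fm hT (fun x => x) := by rw [hTfm, ← hWdef]
      _ = fm hT (fun x => Real.sign x * x) := fm_mul_fm hT _ _
      _ = Tabs := by rw [hTabsdef]; exact congrArg (fm hT) (funext rsign_mul_self)
  have hTW : T * W = Tabs :=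
    calc T * W = fm hT (fun x => x) * fm hT Real.sign := by rw [hTfm, ← hWdef]
      _ = fm hT (fun x => x * Real.sign x) := fm_mul_fm hT _ _
      _ = Tabs := by rw [hTabsdef]; exact congrArg (fm hT) (funext rself_mul_sign)
  have hTpPSD : Tp.PosSemidef := fm_posSemidef hT _ (fun x => le_max_right _ _)
  have hTmPSD : Tm.PosSemidef := fm_posSemidef hT _ (fun x => le_max_right _ _)
  -- Powers–Størmer part
  have hMT1 : M - T = S + S := by rw [hMdef, hTdef]; abel
  have hMT2 : M + T = R + R := by rw [hMdef, hTdef]; abel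
  have hMT1psd : (M - T).PosSemidef := hMT1 ▸ hSps.add hSps
  have hMT2psd : (M + T).PosSemidef := hMT2 ▸ hRps.add hRps
  have hTTp : T * Tp = fm hT (fun x => max x 0 * max x 0) :=
    calc T * Tp = fm hT (fun x => x) * fm hT (fun x => max x 0) := by rw [hTfm, ← hTpdef]
      _ = fm hT (fun x => x * max x 0) := fm_mul_fm hT _ _
      _ = _ := congrArg (fm hT) (funext self_mul_pos)
  have hTTm : T * Tm = - fm hT (fun x => max (-x) 0 * max (-x) 0) := by
    have step : T * Tm = fm hT (fun x => x * max (-x) 0) :=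
      calc T * Tm = fm hT (fun x => x) * fm hT (fun x => max (-x) 0) := by rw [hTfm, ← hTmdef]
        _ = _ := fm_mul_fm hT _ _
    rw [step]
    refine eq_neg_of_add_eq_zero_left ?_
    rw [fm_add_fm]
    rw [show (fun x => x * max (-x) 0 + max (-x) 0 * max (-x) 0) = (fun _ : ℝ => (0:ℝ)) from
      funext self_mul_neg']
    exact fm_zero hT
  have k1 : (fm hT (fun x => max x 0 * max x 0)).trace ≤ (M * Tp).trace := by
    have hdec : M * Tp = (M - T) * Tp + T * Tp := by noncomm_ring
    rw [hdec, Matrix.trace_add, hTTp]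
    exact le_add_of_nonneg_left (trace_mul_nonneg hMT1psd hTpPSD)
  have k2 : (fm hT (fun x => max (-x) 0 * max (-x) 0)).trace ≤ (M * Tm).trace := by
    have hdec : M * Tm = (M + T) * Tm - T * Tm := by noncomm_ring
    rw [hdec, hTTm, sub_neg_eq_add, Matrix.trace_add]
    exact le_add_of_nonneg_left (trace_mul_nonneg hMT2psd hTmPSD)
  have hTT : (T * T).trace = (fm hT (fun x => max x 0 * max x 0)).trace
      + (fm hT (fun x => max (-x) 0 * max (-x) 0)).trace := by
    rw [← Matrix.trace_add, fm_add_fm]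
    congr 1
    calc T * T = fm hT (fun x => x) * fm hT (fun x => x) := by rw [hTfm]
      _ = fm hT (fun x => x * x) := fm_mul_fm hT _ _
      _ = _ := congrArg (fm hT) (funext sq_decomp)
  have hTabs_split : Tabs = Tp + Tm := by
    rw [hTpdef, hTmdef, fm_add_fm, hTabsdef]
    exact (congrArg (fm hT) (funext pos_add_neg)).symm
  have e2 : (T * T).trace ≤ (M * Tabs).trace := by
    rw [hTT, hTabs_split, Matrix.mul_add, Matrix.trace_add]
    exact add_le_add k1 k2
  -- 2Δ = TM + MT
  have hΔ2 : T * M + M * T = Δ + Δ := by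
    rw [hTdef, hMdef, hΔdef, ← hRsq, ← hSsq]; noncomm_ring
  have e3 : (Δ * W).trace = (M * Tabs).trace := by
    have h2 : (Δ * W).trace + (Δ * W).trace = (M * Tabs).trace + (M * Tabs).trace := by
      rw [← Matrix.trace_add, ← Matrix.add_mul, ← hΔ2, Matrix.add_mul, Matrix.trace_add]
      congr 1
      · rw [Matrix.trace_mul_comm, ← Matrix.mul_assoc, hWT, Matrix.trace_mul_comm]
      · rw [Matrix.mul_assoc, hTW]
    have h3 : 2 * (Δ * W).trace = 2 * (M * Tabs).trace := by
      rw [two_mul, two_mul, h2]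
    exact mul_left_cancel₀ two_ne_zero h3
  -- trace distance part
  set Δp := fm hΔ (fun x => max x 0) with hΔpdef
  set Δm := fm hΔ (fun x => max (-x) 0) with hΔmdef
  have hΔpPSD : Δp.PosSemidef := fm_posSemidef hΔ _ (fun x => le_max_right _ _)
  have hΔmPSD : Δm.PosSemidef := fm_posSemidef hΔ _ (fun x => le_max_right _ _)
  have hΔsplit : Δ = Δp - Δm := by
    rw [hΔpdef, hΔmdef, fm_sub_fm]
    rw [show (fun x => max x 0 - max (-x) 0) = (fun x : ℝ => x) from funext pos_sub_neg]
    exact (fm_id hΔ).symm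
  have h1W : ((1 : Matrix d d ℂ) - W).PosSemidef := by
    rw [← fm_one hT, hWdef, fm_sub_fm]
    exact fm_posSemidef hT _ (fun x => by linarith [sign_le_one x])
  have h1W' : ((1 : Matrix d d ℂ) + W).PosSemidef := by
    rw [← fm_one hT, hWdef, fm_add_fm]
    exact fm_posSemidef hT _ (fun x => by linarith [neg_one_le_sign x])
  have a1 : (Δp * W).trace ≤ Δp.trace := by
    have h0 : 0 ≤ (Δp * (1 - W)).trace := trace_mul_nonneg hΔpPSD h1W
    rw [Matrix.mul_sub, Matrix.mul_one, Matrix.trace_sub] at h0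
    exact sub_nonneg.mp h0
  have a2 : -(Δm * W).trace ≤ Δm.trace := by
    have h0 : 0 ≤ (Δm * (1 + W)).trace := trace_mul_nonneg hΔmPSD h1W'
    rw [Matrix.mul_add, Matrix.mul_one, Matrix.trace_add, ← sub_neg_eq_add] at h0
    exact sub_nonneg.mp h0
  have e4 : (Δ * W).trace ≤ (fm hΔ (fun x => |x|)).trace := by
    have hsplit : (Δ * W).trace = (Δp * W).trace + -(Δm * W).trace := by
      conv_lhs => rw [hΔsplit]
      rw [Matrix.sub_mul, Matrix.trace_sub, sub_eq_add_neg]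
    have habs : (fm hΔ fun x => |x|).trace = Δp.trace + Δm.trace := by
      rw [hΔpdef, hΔmdef, ← Matrix.trace_add, fm_add_fm]
      refine congrArg Matrix.trace ?_
      exact (congrArg (fm hΔ) (funext pos_add_neg)).symm
    rw [hsplit, habs]
    exact add_le_add a1 a2
  -- trace norm of Δ
  have hpsdΔ : (Δᴴ * Δ).PosSemidef := posSemidef_conjTranspose_mul_self Δ
  have habsPSD : (fm hΔ (fun x => |x|)).PosSemidef := fm_posSemidef hΔ _ (fun x => abs_nonneg x)
  have hsqabs : (fm hΔ (fun x => |x|)) ^ 2 = Δᴴ * Δ := by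
    rw [pow_two, fm_mul_fm]
    rw [show (fun x => |x| * |x|) = (fun x : ℝ => x * x) from funext fun x => abs_mul_abs_self x]
    rw [← fm_mul_fm, fm_id, hΔ.eq]
  have e5 : traceNorm Δ = (fm hΔ (fun x => |x|)).trace.re := by
    unfold traceNorm
    rw [psdSqrt_of_posSemidef hpsdΔ,
      ← habsPSD.eq_sqrt_of_sq_eq hpsdΔ hsqabs]
  -- fidelity part
  have f1 : psdSqrt σ * ρ * psdSqrt σ = (R * S)ᴴ * (R * S) := by
    show S * ρ * S = (R * S)ᴴ * (R * S)
    rw [Matrix.conjTranspose_mul, hRps.1.eq, hSps.1.eq, ← hRsq]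
    noncomm_ring
  have f2 : Real.sqrt (qFidelity ρ σ) = traceNorm (R * S) := by
    have hq : qFidelity ρ σ = (traceNorm (R * S)) ^ 2 := by
      unfold qFidelity traceNorm
      rw [f1]
    rw [hq]
    exact Real.sqrt_sq (traceNorm_nonneg _)
  have f3 : ((R * S).trace).re ≤ Real.sqrt (qFidelity ρ σ) := by
    rw [f2]; exact re_trace_le_traceNorm (R * S)
  -- trace identity
  have t1 : (T * T).trace = ρ.trace + σ.trace - ((R * S).trace + (R * S).trace) := by
    have hexp : T * T = ρ + σ - (R * S + S * R) := by
      rw [hTdef, ← hRsq, ← hSsq]; noncomm_ring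
    rw [hexp, Matrix.trace_sub, Matrix.trace_add, Matrix.trace_add,
      Matrix.trace_mul_comm S R]
  -- combine: complex chain
  have chain : (T * T).trace ≤ (fm hΔ (fun x => |x|)).trace := le_trans e2 (e3 ▸ e4)
  have chain_re : ((T * T).trace).re ≤ traceNorm Δ := by
    rw [e5]; exact (Complex.le_def.mp chain).1
  have t2 : ((T * T).trace).re = 2 - 2 * ((R * S).trace).re := by
    rw [t1, hρ1, hσ1]
    simp [Complex.sub_re, Complex.add_re]
    ring
  rw [t2] at chain_re
  have := f3
  linarith
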